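/- Let H be a Hopf algebra, B an H-module algebra, and form the cross product B⋊H. If B and H are *-algebras, H is a Hopf *-algebra, and the action satisfies the unitarity condition (h▷b)* = (Sh)*▷b*, then (b⊗h)* := (1⊗h*)(b*⊗1) defines a *-algebra structure on B⋊H containing B and H as *-subalgebras. -/

import Mathlib

set_option maxHeartbeats 1000000
set_option synthInstance.maxHeartbeats 400000
set_option linter.unusedSectionVars false

open scoped TensorProduct

/-- Interpret a list of pairs as a sum of pure tensors (Sweedler representation). -/
noncomputable def toT {H : Type} [AddCommMonoid H] [Module ℂ H] (l : List (H × H)) :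
    H ⊗[ℂ] H := (l.map fun p => p.1 ⊗ₜ[ℂ] p.2).sum


section Helpers

variable {M N : Type} [AddCommGroup M] [Module ℂ M] [AddCommGroup N] [Module ℂ N]

lemma list_map_add_sum {α : Type} (l : List α) (g h : α → M) :
    (l.map fun x => g x + h x).sum = (l.map g).sum + (l.map h).sum := by
  induction l with
  | nil => simp
  | cons a t ih => simp [ih]; abel

lemma list_sum_comm {α β : Type} (l : List α) (l' : List β) (f : α → β → M) :
    (l.map fun a => (l'.map fun b => f a b).sum).sum
      = (l'.map fun b => (l.map fun a => f a b).sum).sum := by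
  induction l with
  | nil => simp
  | cons a t ih => simp [ih, list_map_add_sum]

lemma tmul_list_sum {α : Type} (m : M) (l : List α) (f : α → N) :
    (m ⊗ₜ[ℂ] (l.map f).sum) = (l.map fun a => m ⊗ₜ[ℂ] f a).sum := by
  simpa [List.map_map, Function.comp_def] using
    map_list_sum (TensorProduct.mk ℂ M N m) (l.map f)

lemma list_sum_tmul {α : Type} (n : N) (l : List α) (f : α → M) :
    ((l.map f).sum ⊗ₜ[ℂ] n) = (l.map fun a => f a ⊗ₜ[ℂ] n).sum := by
  simpa [List.map_map, Function.comp_def] using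
    map_list_sum ((TensorProduct.mk ℂ M N).flip n) (l.map f)


lemma map_sum1 {M N' F : Type} [AddCommMonoid M] [AddCommMonoid N'] [FunLike F M N']
    [AddMonoidHomClass F M N'] (φ : F) {α : Type} (l : List α) (f : α → M) :
    φ (l.map f).sum = (l.map fun a => φ (f a)).sum := by
  rw [map_list_sum, List.map_map]; rfl

lemma map_sum2 {M N' F : Type} [AddCommMonoid M] [AddCommMonoid N'] [FunLike F M N']
    [AddMonoidHomClass F M N'] (φ : F) {α β : Type} (l : List α) (g : α → List β)
    (f : α → β → M) :
    φ (l.map fun a => ((g a).map fun b => f a b).sum).sum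
      = (l.map fun a => ((g a).map fun b => φ (f a b)).sum).sum := by
  rw [map_sum1]
  congr 1
  apply List.map_congr_left
  intro a _
  rw [map_sum1]

lemma map_sum3 {M N' F : Type} [AddCommMonoid M] [AddCommMonoid N'] [FunLike F M N']
    [AddMonoidHomClass F M N'] (φ : F) {α β γ : Type} (l : List α) (g : α → List β)
    (g2 : α → β → List γ) (f : α → β → γ → M) :
    φ (l.map fun a => ((g a).map fun b => ((g2 a b).map fun c => f a b c).sum).sum).sum
      = (l.map fun a => ((g a).map fun b =>
          ((g2 a b).map fun c => φ (f a b c)).sum).sum).sum := by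
  rw [map_sum1]
  congr 1
  apply List.map_congr_left
  intro a _
  rw [map_sum2]

/-- pointwise star on a tensor product of star modules -/
noncomputable def starTP {M N : Type} [AddCommGroup M] [Module ℂ M] [StarAddMonoid M]
    [StarModule ℂ M] [AddCommGroup N] [Module ℂ N] [StarAddMonoid N] [StarModule ℂ N] :
    M ⊗[ℂ] N →+ M ⊗[ℂ] N :=
  TensorProduct.liftAddHom
    (AddMonoidHom.mk' (fun m => AddMonoidHom.mk' (fun n => star m ⊗ₜ[ℂ] star n)
        (fun x y => by show star m ⊗ₜ[ℂ] star (x+y) = _; rw [star_add, TensorProduct.tmul_add]))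
      (fun x y => by
        ext n
        show star (x + y) ⊗ₜ[ℂ] star n = star x ⊗ₜ[ℂ] star n + star y ⊗ₜ[ℂ] star n
        rw [star_add, TensorProduct.add_tmul]))
    (by intro c m n
        show star (c • m) ⊗ₜ[ℂ] star n = star m ⊗ₜ[ℂ] star (c • n)
        rw [star_smul, star_smul, TensorProduct.smul_tmul])

@[simp] lemma starTP_tmul {M N : Type} [AddCommGroup M] [Module ℂ M] [StarAddMonoid M]
    [StarModule ℂ M] [AddCommGroup N] [Module ℂ N] [StarAddMonoid N] [StarModule ℂ N]
    (m : M) (n : N) : starTP (m ⊗ₜ[ℂ] n) = star m ⊗ₜ[ℂ] star n :=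
  TensorProduct.liftAddHom_tmul _ _ m n

lemma starTP_smul {M N : Type} [AddCommGroup M] [Module ℂ M] [StarAddMonoid M]
    [StarModule ℂ M] [AddCommGroup N] [Module ℂ N] [StarAddMonoid N] [StarModule ℂ N]
    (c : ℂ) (x : M ⊗[ℂ] N) : starTP (c • x) = star c • starTP x := by
  induction x using TensorProduct.induction_on with
  | zero => simp
  | tmul m n =>
      rw [TensorProduct.smul_tmul', starTP_tmul, starTP_tmul, star_smul,
        TensorProduct.smul_tmul']
  | add x y hx hy => simp [smul_add, hx, hy]

end Helpers

section ToT

variable {H M : Type} [AddCommGroup H] [Module ℂ H] [AddCommGroup M] [Module ℂ M]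

lemma map_toT (φ : H ⊗[ℂ] H →ₗ[ℂ] M) (l : List (H × H)) :
    φ (toT l) = (l.map fun p => φ (p.1 ⊗ₜ[ℂ] p.2)).sum := by
  rw [toT, map_list_sum, List.map_map]; rfl

lemma addHom_toT (φ : H ⊗[ℂ] H →+ M) (l : List (H × H)) :
    φ (toT l) = (l.map fun p => φ (p.1 ⊗ₜ[ℂ] p.2)).sum := by
  rw [toT, map_list_sum, List.map_map]; rfl

lemma toT_mul {A : Type} [Ring A] [Algebra ℂ A] (l m : List (A × A)) :
    toT l * toT m
      = (l.map fun p => (m.map fun r => (p.1 * r.1) ⊗ₜ[ℂ] (p.2 * r.2)).sum).sum := by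
  rw [toT, toT]
  induction l with
  | nil => simp
  | cons a t ih =>
      simp only [List.map_cons, List.sum_cons, add_mul, ih]
      congr 1
      have := map_list_sum (AddMonoidHom.mulLeft (a.1 ⊗ₜ[ℂ] a.2)) (m.map fun p => p.1 ⊗ₜ[ℂ] p.2)
      simp only [AddMonoidHom.coe_mulLeft, List.map_map, Function.comp] at this
      rw [show a.1 ⊗ₜ[ℂ] a.2 * (List.map (fun p => p.1 ⊗ₜ[ℂ] p.2) m).sum
          = _ from this]
      congr 1
      ext p
      simp [Algebra.TensorProduct.tmul_mul_tmul]

end ToT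


/-- pointwise star on a triple tensor product -/
noncomputable def starTP3 {M N P : Type} [AddCommGroup M] [Module ℂ M] [StarAddMonoid M]
    [StarModule ℂ M] [AddCommGroup N] [Module ℂ N] [StarAddMonoid N] [StarModule ℂ N]
    [AddCommGroup P] [Module ℂ P] [StarAddMonoid P] [StarModule ℂ P] :
    M ⊗[ℂ] (N ⊗[ℂ] P) →+ M ⊗[ℂ] (N ⊗[ℂ] P) :=
  TensorProduct.liftAddHom
    (AddMonoidHom.mk' (fun m => (AddMonoidHom.mk' (fun t => star m ⊗ₜ[ℂ] t)
          (fun x y => by show star m ⊗ₜ[ℂ] (x+y) = _; rw [TensorProduct.tmul_add])).comp (starTP (M := N) (N := P)))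
      (fun x y => by
        ext t
        show star (x + y) ⊗ₜ[ℂ] starTP t = star x ⊗ₜ[ℂ] starTP t + star y ⊗ₜ[ℂ] starTP t
        rw [star_add, TensorProduct.add_tmul]))
    (by intro c m t
        show star (c • m) ⊗ₜ[ℂ] starTP t = star m ⊗ₜ[ℂ] starTP (c • t)
        rw [star_smul, starTP_smul, TensorProduct.smul_tmul])

@[simp] lemma starTP3_tmul {M N P : Type} [AddCommGroup M] [Module ℂ M] [StarAddMonoid M]
    [StarModule ℂ M] [AddCommGroup N] [Module ℂ N] [StarAddMonoid N] [StarModule ℂ N]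
    [AddCommGroup P] [Module ℂ P] [StarAddMonoid P] [StarModule ℂ P]
    (m : M) (n : N) (p : P) :
    starTP3 (m ⊗ₜ[ℂ] (n ⊗ₜ[ℂ] p)) = star m ⊗ₜ[ℂ] (star n ⊗ₜ[ℂ] star p) := by
  rw [starTP3, TensorProduct.liftAddHom_tmul]
  show star m ⊗ₜ[ℂ] starTP (n ⊗ₜ[ℂ] p) = _
  rw [starTP_tmul]

/-- If `B` is an `H`-module algebra for a Hopf *-algebra `H`, `B` is a
*-algebra, and the action obeys the unitarity condition `(h ▷ b)* = (S h)* ▷ b*`, then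
`(b ⊗ h)* := (1 ⊗ h*)(b* ⊗ 1)` defines a *-algebra structure on the cross product `B ⋊ H`
containing `B` and `H` as *-subalgebras. -/
theorem cross_product_star_structure
    {B H : Type} [Ring B] [Algebra ℂ B] [StarRing B] [StarModule ℂ B]
    [Ring H] [HopfAlgebra ℂ H] [StarRing H] [StarModule ℂ H]
    (ρ : H → List (H × H))
    (hρ : ∀ x, Coalgebra.comul (R := ℂ) x = toT (ρ x))
    -- Hopf *-algebra axioms for H
    (hcomulStar : ∀ x : H, Coalgebra.comul (R := ℂ) (star x)
        = toT ((ρ x).map fun p => (star p.1, star p.2)))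
    (hcounitStar : ∀ x : H, Coalgebra.counit (R := ℂ) (star x)
        = star (Coalgebra.counit (R := ℂ) (A := H) x))
    (hSstar : ∀ x : H, HopfAlgebra.antipode (R := ℂ)
        (star (HopfAlgebra.antipode (R := ℂ) (star x))) = x)
    -- the action of `H` on `B`, making `B` an `H`-module algebra
    (act : H →ₗ[ℂ] B →ₗ[ℂ] B)
    (hactmul : ∀ (g h : H) (b : B), act (g * h) b = act g (act h b))
    (hactone : ∀ b : B, act 1 b = b)
    (hmodalg : ∀ (h : H) (b c : B),
        act h (b * c) = ((ρ h).map fun q => act q.1 b * act q.2 c).sum)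
    (hmodone : ∀ h : H, act h 1 = Coalgebra.counit (R := ℂ) h • (1 : B))
    -- the unitarity condition
    (huni : ∀ (h : H) (b : B), star (act h b) = act (star (HopfAlgebra.antipode (R := ℂ) h)) (star b))
    -- the cross product `B ⋊ H` built on `B ⊗ H`
    (mulD : (B ⊗[ℂ] H) →ₗ[ℂ] (B ⊗[ℂ] H) →ₗ[ℂ] (B ⊗[ℂ] H))
    (hmulD : ∀ (b : B) (h : H) (c : B) (g : H),
        mulD (b ⊗ₜ[ℂ] h) (c ⊗ₜ[ℂ] g)
          = ((ρ h).map fun q => (b * act q.1 c) ⊗ₜ[ℂ] (q.2 * g)).sum) :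
    ∃ st : B ⊗[ℂ] H → B ⊗[ℂ] H,
      (∀ x y, st (x + y) = st x + st y) ∧
      (∀ (c : ℂ) (x : B ⊗[ℂ] H), st (c • x) = (starRingEnd ℂ) c • st x) ∧
      -- the defining formula `(b ⊗ h)* = (1 ⊗ h*)(b* ⊗ 1)`
      (∀ (b : B) (h : H),
          st (b ⊗ₜ[ℂ] h) = mulD ((1 : B) ⊗ₜ[ℂ] star h) (star b ⊗ₜ[ℂ] (1 : H))) ∧
      -- involution
      (∀ x, st (st x) = x) ∧
      -- antimultiplicativity
      (∀ x y, st (mulD x y) = mulD (st y) (st x)) ∧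
      -- `B` and `H` are *-subalgebras
      (∀ b : B, st (b ⊗ₜ[ℂ] (1 : H)) = star b ⊗ₜ[ℂ] (1 : H)) ∧
      (∀ h : H, st ((1 : B) ⊗ₜ[ℂ] h) = (1 : B) ⊗ₜ[ℂ] star h) := by
  classical
  -- construct `st` with its basic properties
  obtain ⟨st, hstadd, hstzero, hstsmul, hsttmul⟩ :
      ∃ st : B ⊗[ℂ] H → B ⊗[ℂ] H,
        (∀ x y, st (x + y) = st x + st y) ∧ (st 0 = 0) ∧
        (∀ (c : ℂ) (x : B ⊗[ℂ] H), st (c • x) = (starRingEnd ℂ) c • st x) ∧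
        (∀ (d : B) (m : H), st (d ⊗ₜ[ℂ] m)
          = TensorProduct.map (act.flip (star d)) LinearMap.id
              (Coalgebra.comul (R := ℂ) (star m))) := by
    have Φeval : ∀ (d : B) (t : H ⊗[ℂ] H),
        TensorProduct.map (TensorProduct.lift act.flip) LinearMap.id
          ((TensorProduct.assoc ℂ B H H).symm (d ⊗ₜ[ℂ] t))
          = TensorProduct.map (act.flip d) LinearMap.id t := by
      intro d t
      induction t using TensorProduct.induction_on with
      | zero => simp
      | tmul y z => simp [TensorProduct.assoc_symm_tmul]
      | add x y hx hy => simp [TensorProduct.tmul_add, hx, hy]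
    refine ⟨fun x => TensorProduct.map (TensorProduct.lift act.flip) LinearMap.id
        ((TensorProduct.assoc ℂ B H H).symm
          ((LinearMap.lTensor B (Coalgebra.comul (R := ℂ))) (starTP x))), ?_, ?_, ?_, ?_⟩
    · intro x y; beta_reduce; rw [map_add starTP]; simp
    · beta_reduce; rw [map_zero starTP]; simp
    · intro c x
      beta_reduce
      rw [starTP_smul]
      simp [Complex.star_def]
    · intro d m
      beta_reduce
      rw [starTP_tmul, LinearMap.lTensor_tmul, Φeval]
  have hstsum : ∀ {α : Type} (l : List α) (f : α → B ⊗[ℂ] H),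
      st (l.map f).sum = (l.map fun a => st (f a)).sum := by
    intro α l f
    induction l with
    | nil => simpa using hstzero
    | cons a t ih => rw [List.map_cons, List.sum_cons, hstadd, ih, List.map_cons, List.sum_cons]

  -- counit law in list form
  have F1 : ∀ h : H, ((ρ h).map fun p => Coalgebra.counit (R := ℂ) p.1 • p.2).sum = h := by
    intro h
    have perp : ∀ p : H × H,
        ((TensorProduct.lid ℂ H).toLinearMap ∘ₗ
          LinearMap.rTensor H (Coalgebra.counit (R := ℂ))) (p.1 ⊗ₜ[ℂ] p.2)
          = Coalgebra.counit (R := ℂ) p.1 • p.2 := by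
      intro p
      simp [LinearMap.rTensor_tmul]
    rw [← List.map_congr_left (fun p _ => perp p), ← map_toT, ← hρ]
    simp [Coalgebra.rTensor_counit_comul]
  -- antipode law in list form
  have F3 : ∀ h : H, ((ρ h).map fun p =>
      HopfAlgebra.antipode (R := ℂ) p.1 * p.2).sum
      = Coalgebra.counit (R := ℂ) h • (1 : H) := by
    intro h
    have perp : ∀ p : H × H,
        (LinearMap.mul' ℂ H ∘ₗ LinearMap.rTensor H (HopfAlgebra.antipode (R := ℂ)))
          (p.1 ⊗ₜ[ℂ] p.2) = HopfAlgebra.antipode (R := ℂ) p.1 * p.2 := by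
      intro p
      simp [LinearMap.rTensor_tmul, LinearMap.mul'_apply]
    rw [← List.map_congr_left (fun p _ => perp p), ← map_toT, ← hρ]
    have := HopfAlgebra.mul_antipode_rTensor_comul_apply (R := ℂ) h
    simp only [LinearMap.coe_comp, Function.comp_apply]
    rw [this, Algebra.algebraMap_eq_smul_one]
  -- coassociativity in list form
  have coassocL : ∀ h : H,
      ((ρ h).map fun q => ((ρ q.1).map fun s => s.1 ⊗ₜ[ℂ] (s.2 ⊗ₜ[ℂ] q.2)).sum).sum
        = ((ρ h).map fun q => ((ρ q.2).map fun r => q.1 ⊗ₜ[ℂ] (r.1 ⊗ₜ[ℂ] r.2)).sum).sum := by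
    intro h
    have h0 := Coalgebra.coassoc_apply (R := ℂ) h
    have perq1 : ∀ q : H × H,
        ((TensorProduct.assoc ℂ H H H).toLinearMap ∘ₗ
          LinearMap.rTensor H (Coalgebra.comul (R := ℂ))) (q.1 ⊗ₜ[ℂ] q.2)
          = ((ρ q.1).map fun s => s.1 ⊗ₜ[ℂ] (s.2 ⊗ₜ[ℂ] q.2)).sum := by
      intro q
      simp only [LinearMap.coe_comp, Function.comp_apply, LinearMap.rTensor_tmul]
      rw [hρ q.1, toT, list_sum_tmul, map_sum1]
      simp [TensorProduct.assoc_tmul]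
    have perq2 : ∀ q : H × H,
        (LinearMap.lTensor H (Coalgebra.comul (R := ℂ))) (q.1 ⊗ₜ[ℂ] q.2)
          = ((ρ q.2).map fun r => q.1 ⊗ₜ[ℂ] (r.1 ⊗ₜ[ℂ] r.2)).sum := by
      intro q
      rw [LinearMap.lTensor_tmul, hρ q.2, toT, tmul_list_sum]
    rw [← List.map_congr_left (fun q _ => perq1 q), ← List.map_congr_left (fun q _ => perq2 q),
      ← map_toT, ← map_toT, ← hρ]
    simpa using h0
  -- the key Hopf algebra identity in list form
  have NL : ∀ k : H, ((ρ k).map fun q => ((ρ q.2).map fun r =>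
        (HopfAlgebra.antipode (R := ℂ) q.1 * r.1) ⊗ₜ[ℂ] r.2).sum).sum
      = (1 : H) ⊗ₜ[ℂ] k := by
    intro k
    have Ttmul : ∀ x y z : H,
        (LinearMap.rTensor H (LinearMap.mul' ℂ H ∘ₗ
            LinearMap.rTensor H (HopfAlgebra.antipode (R := ℂ))) ∘ₗ
          (TensorProduct.assoc ℂ H H H).symm.toLinearMap) (x ⊗ₜ[ℂ] (y ⊗ₜ[ℂ] z))
          = (HopfAlgebra.antipode (R := ℂ) x * y) ⊗ₜ[ℂ] z := by
      intro x y z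
      simp [TensorProduct.assoc_symm_tmul, LinearMap.rTensor_tmul, LinearMap.mul'_apply]
    have key := congrArg (LinearMap.rTensor H (LinearMap.mul' ℂ H ∘ₗ
            LinearMap.rTensor H (HopfAlgebra.antipode (R := ℂ))) ∘ₗ
          (TensorProduct.assoc ℂ H H H).symm.toLinearMap) (coassocL k)
    rw [map_sum2, map_sum2] at key
    simp only [Ttmul] at key
    -- evaluate the left-hand side of `key`
    have lhs1 : ∀ q : H × H, ((ρ q.1).map fun s =>
        (HopfAlgebra.antipode (R := ℂ) s.1 * s.2) ⊗ₜ[ℂ] q.2).sum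
        = (1 : H) ⊗ₜ[ℂ] (Coalgebra.counit (R := ℂ) q.1 • q.2) := by
      intro q
      rw [← list_sum_tmul, F3, TensorProduct.smul_tmul]
    rw [List.map_congr_left (fun q _ => lhs1 q), ← tmul_list_sum, F1] at key
    exact key.symm

  -- four-fold version of the Hopf identity
  have NL3 : ∀ h : H, ((ρ h).map fun q => ((ρ q.2).map fun r => ((ρ r.1).map fun w =>
        (HopfAlgebra.antipode (R := ℂ) q.1 * w.1) ⊗ₜ[ℂ] (w.2 ⊗ₜ[ℂ] r.2)).sum).sum).sum
      = ((ρ h).map fun t => (1 : H) ⊗ₜ[ℂ] (t.1 ⊗ₜ[ℂ] t.2)).sum := by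
    intro h
    have perq : ∀ q : H × H,
        ((ρ q.2).map fun r => ((ρ r.1).map fun w =>
          (HopfAlgebra.antipode (R := ℂ) q.1 * w.1) ⊗ₜ[ℂ] (w.2 ⊗ₜ[ℂ] r.2)).sum).sum
        = ((ρ q.2).map fun r => ((ρ r.2).map fun w =>
          (HopfAlgebra.antipode (R := ℂ) q.1 * r.1) ⊗ₜ[ℂ] (w.1 ⊗ₜ[ℂ] w.2)).sum).sum := by
      intro q
      have key := congrArg (LinearMap.rTensor (H ⊗[ℂ] H)
          (LinearMap.mulLeft ℂ (HopfAlgebra.antipode (R := ℂ) q.1))) (coassocL q.2)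
      rw [map_sum2, map_sum2] at key
      simpa [LinearMap.rTensor_tmul] using key
    simp only [perq]
    have perqr : ∀ q r : H × H,
        ((ρ r.2).map fun w =>
          (HopfAlgebra.antipode (R := ℂ) q.1 * r.1) ⊗ₜ[ℂ] (w.1 ⊗ₜ[ℂ] w.2)).sum
        = (LinearMap.lTensor H (Coalgebra.comul (R := ℂ)))
            ((HopfAlgebra.antipode (R := ℂ) q.1 * r.1) ⊗ₜ[ℂ] r.2) := by
      intro q r
      rw [LinearMap.lTensor_tmul, hρ r.2, toT, tmul_list_sum]
    simp only [perqr]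
    rw [← map_sum2 (LinearMap.lTensor H (Coalgebra.comul (R := ℂ))), NL h,
      LinearMap.lTensor_tmul, hρ h, toT, tmul_list_sum]
  -- the formula for `st` on pure tensors, in list form
  have st_list' : ∀ (d : B) (m : H), st (d ⊗ₜ[ℂ] m)
      = ((ρ (star m)).map fun p => act p.1 (star d) ⊗ₜ[ℂ] p.2).sum := by
    intro d m
    rw [hsttmul, hρ, map_toT]
    simp
  have st_list : ∀ (d : B) (m : H), st (d ⊗ₜ[ℂ] m)
      = ((ρ m).map fun t => act (star t.1) (star d) ⊗ₜ[ℂ] star t.2).sum := by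
    intro d m
    rw [hsttmul, hcomulStar, map_toT, List.map_map]
    simp [Function.comp_def]
  -- the defining formula (bullet 3)
  have hformula : ∀ (b : B) (h : H),
      st (b ⊗ₜ[ℂ] h) = mulD ((1 : B) ⊗ₜ[ℂ] star h) (star b ⊗ₜ[ℂ] (1 : H)) := by
    intro b h
    rw [st_list', hmulD]
    simp
  -- multiplication against `B ⊗ 1`
  have L1 : ∀ (c d : B) (m : H), mulD (c ⊗ₜ[ℂ] (1 : H)) (d ⊗ₜ[ℂ] m) = (c * d) ⊗ₜ[ℂ] m := by
    intro c d m
    rw [hmulD]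
    have perp : ∀ p : H × H, (c * act p.1 d) ⊗ₜ[ℂ] (p.2 * m)
        = (TensorProduct.map (LinearMap.mulLeft ℂ c ∘ₗ act.flip d)
            (LinearMap.mulRight ℂ m)) (p.1 ⊗ₜ[ℂ] p.2) := by
      intro p; simp
    rw [List.map_congr_left (fun p _ => perp p), ← map_toT, ← hρ]
    have hone : Coalgebra.comul (R := ℂ) (1 : H) = (1 : H) ⊗ₜ[ℂ] (1 : H) := by
      simpa [Algebra.TensorProduct.one_def] using Bialgebra.comul_one ℂ H
    rw [hone]
    simp [hactone]
  -- multiplication against `1 ⊗ H`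
  have etaL : ∀ (d : B) (m x : H), mulD ((1 : B) ⊗ₜ[ℂ] x) (d ⊗ₜ[ℂ] m)
      = ((ρ x).map fun p => act p.1 d ⊗ₜ[ℂ] (p.2 * m)).sum := by
    intro d m x
    rw [hmulD]
    simp
  -- `1 ⊗ H` multiplies like `H`
  have eta_mul : ∀ (x y : H) (w : B ⊗[ℂ] H),
      mulD ((1 : B) ⊗ₜ[ℂ] x) (mulD ((1 : B) ⊗ₜ[ℂ] y) w)
        = mulD ((1 : B) ⊗ₜ[ℂ] (x * y)) w := by
    intro x y w
    induction w using TensorProduct.induction_on with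
    | zero => simp
    | add w1 w2 h1 h2 => simp [h1, h2]
    | tmul d m =>
      rw [etaL, map_sum1 (mulD ((1 : B) ⊗ₜ[ℂ] x))]
      simp only [etaL]
      have perp : ∀ p : H × H, act p.1 d ⊗ₜ[ℂ] (p.2 * m)
          = (TensorProduct.map (act.flip d) (LinearMap.mulRight ℂ m)) (p.1 ⊗ₜ[ℂ] p.2) := by
        intro p; simp
      rw [List.map_congr_left (fun p _ => perp p), ← map_toT, ← hρ, Bialgebra.comul_mul,
        hρ x, hρ y, toT_mul, map_sum2]
      simp only [TensorProduct.map_tmul, LinearMap.flip_apply, LinearMap.mulRight_apply,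
        hactmul, mul_assoc]
      rw [list_sum_comm]

  -- associativity against `B ⊗ 1` in the middle
  have Aassoc : ∀ (c : B) (z w : B ⊗[ℂ] H),
      mulD z (mulD (c ⊗ₜ[ℂ] (1 : H)) w) = mulD (mulD z (c ⊗ₜ[ℂ] (1 : H))) w := by
    intro c z w
    induction z using TensorProduct.induction_on with
    | zero => simp
    | add z1 z2 h1 h2 => simp [h1, h2]
    | tmul b h =>
      induction w using TensorProduct.induction_on with
      | zero => simp
      | add w1 w2 h1 h2 => simp [h1, h2]
      | tmul d m =>
        rw [L1, hmulD]
        -- right-hand side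
        have rhs1 : mulD (b ⊗ₜ[ℂ] h) (c ⊗ₜ[ℂ] (1 : H))
            = ((ρ h).map fun q => (b * act q.1 c) ⊗ₜ[ℂ] q.2).sum := by
          rw [hmulD]; simp
        rw [rhs1, ← LinearMap.flip_apply (mulD) _ (d ⊗ₜ[ℂ] m),
          map_sum1 (mulD.flip (d ⊗ₜ[ℂ] m))]
        simp only [LinearMap.flip_apply, hmulD]
        -- left-hand side: expand hmodalg and distribute
        have perq : ∀ q : H × H, (b * act q.1 (c * d)) ⊗ₜ[ℂ] (q.2 * m)
            = ((ρ q.1).map fun s => (b * (act s.1 c * act s.2 d)) ⊗ₜ[ℂ] (q.2 * m)).sum := by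
          intro q
          have hb := map_sum1 (AddMonoidHom.mulLeft b) (ρ q.1)
            (fun s => act s.1 c * act s.2 d)
          simp only [AddMonoidHom.coe_mulLeft] at hb
          rw [hmodalg, hb, list_sum_tmul]
        simp only [perq]
        -- transfer along coassociativity
        have Ttmul : ∀ x y z : H,
            ((TensorProduct.map
                (LinearMap.mul' ℂ B ∘ₗ TensorProduct.map
                  (LinearMap.mulLeft ℂ b ∘ₗ act.flip c) (act.flip d))
                (LinearMap.mulRight ℂ m)) ∘ₗ
              (TensorProduct.assoc ℂ H H H).symm.toLinearMap) (x ⊗ₜ[ℂ] (y ⊗ₜ[ℂ] z))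
            = ((b * act x c) * act y d) ⊗ₜ[ℂ] (z * m) := by
          intro x y z
          simp [TensorProduct.assoc_symm_tmul, LinearMap.mul'_apply]
        have key := congrArg ((TensorProduct.map
                (LinearMap.mul' ℂ B ∘ₗ TensorProduct.map
                  (LinearMap.mulLeft ℂ b ∘ₗ act.flip c) (act.flip d))
                (LinearMap.mulRight ℂ m)) ∘ₗ
              (TensorProduct.assoc ℂ H H H).symm.toLinearMap) (coassocL h)
        rw [map_sum2, map_sum2] at key
        simp only [Ttmul, mul_assoc] at key
        simpa only [mul_assoc] using key

  -- commuting `st` past right multiplication by `1 ⊗ g`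
  have R1 : ∀ (z : B ⊗[ℂ] H) (g : H),
      st (mulD z ((1 : B) ⊗ₜ[ℂ] g)) = mulD ((1 : B) ⊗ₜ[ℂ] star g) (st z) := by
    intro z g
    induction z using TensorProduct.induction_on with
    | zero => simp [hstzero]
    | add z1 z2 h1 h2 => simp [hstadd, h1, h2]
    | tmul b h =>
      have e1 : mulD (b ⊗ₜ[ℂ] h) ((1 : B) ⊗ₜ[ℂ] g) = b ⊗ₜ[ℂ] (h * g) := by
        rw [hmulD]
        have perq : ∀ q : H × H, (b * act q.1 1) ⊗ₜ[ℂ] (q.2 * g)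
            = b ⊗ₜ[ℂ] ((Coalgebra.counit (R := ℂ) q.1 • q.2) * g) := by
          intro q
          rw [hmodone, mul_smul_comm, mul_one, TensorProduct.smul_tmul, smul_mul_assoc]
        simp only [perq]
        rw [← tmul_list_sum]
        have hmr := map_sum1 (AddMonoidHom.mulRight g) (ρ h)
          (fun q => Coalgebra.counit (R := ℂ) q.1 • q.2)
        simp only [AddMonoidHom.coe_mulRight] at hmr
        rw [← hmr, F1]
      rw [e1, hformula, star_mul, ← eta_mul, ← hformula]
  -- the action against starred elements, in list form
  have actstar_mul : ∀ (x : H) (X Y : B), act (star x) (X * Y)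
      = ((ρ x).map fun w => act (star w.1) X * act (star w.2) Y).sum := by
    intro x X Y
    rw [hmodalg]
    have perp : ∀ p : H × H, act p.1 X * act p.2 Y
        = (LinearMap.mul' ℂ B ∘ₗ TensorProduct.map (act.flip X) (act.flip Y))
            (p.1 ⊗ₜ[ℂ] p.2) := by
      intro p; simp [LinearMap.mul'_apply]
    rw [List.map_congr_left (fun p _ => perp p), ← map_toT, ← hρ, hcomulStar, map_toT,
      List.map_map]
    simp [Function.comp_def, LinearMap.mul'_apply]
  -- composing two starred actions
  have comb : ∀ (u v : H) (X : B), act (star u) (act (star v) X) = act (star (v * u)) X := by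
    intro u v X
    rw [star_mul, hactmul]
  -- commuting `st` past right multiplication by `c ⊗ 1`
  have R2 : ∀ (z : B ⊗[ℂ] H) (c : B),
      st (mulD z (c ⊗ₜ[ℂ] (1 : H))) = mulD (star c ⊗ₜ[ℂ] (1 : H)) (st z) := by
    intro z c
    induction z using TensorProduct.induction_on with
    | zero => simp [hstzero]
    | add z1 z2 h1 h2 => simp [hstadd, h1, h2]
    | tmul b h =>
      have e1 : mulD (b ⊗ₜ[ℂ] h) (c ⊗ₜ[ℂ] (1 : H))
          = ((ρ h).map fun q => (b * act q.1 c) ⊗ₜ[ℂ] q.2).sum := by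
        rw [hmulD]; simp
      rw [e1, hstsum]
      simp only [st_list]
      have starb : ∀ q : H × H, star (b * act q.1 c)
          = act (star (HopfAlgebra.antipode (R := ℂ) q.1)) (star c) * star b := by
        intro q; rw [star_mul, huni]
      simp only [starb, actstar_mul, comb, list_sum_tmul]
      -- package as an additive map applied to the four-fold Hopf identity
      have Ceval : ∀ x y z : H,
          (((TensorProduct.map (LinearMap.mul' ℂ B ∘ₗ
              TensorProduct.map (act.flip (star c)) (act.flip (star b)))
            LinearMap.id) ∘ₗ
            (TensorProduct.assoc ℂ H H H).symm.toLinearMap).toAddMonoidHom.comp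
              starTP3) (x ⊗ₜ[ℂ] (y ⊗ₜ[ℂ] z))
          = (act (star x) (star c) * act (star y) (star b)) ⊗ₜ[ℂ] star z := by
        intro x y z
        simp [TensorProduct.assoc_symm_tmul, LinearMap.mul'_apply]
      have big := map_sum3 ((((TensorProduct.map (LinearMap.mul' ℂ B ∘ₗ
              TensorProduct.map (act.flip (star c)) (act.flip (star b)))
            LinearMap.id) ∘ₗ
            (TensorProduct.assoc ℂ H H H).symm.toLinearMap).toAddMonoidHom.comp
              starTP3)) (ρ h) (fun q => ρ q.2) (fun _ r => ρ r.1)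
          (fun q r w => (HopfAlgebra.antipode (R := ℂ) q.1 * w.1) ⊗ₜ[ℂ] (w.2 ⊗ₜ[ℂ] r.2))
      rw [NL3 h, map_sum1] at big
      simp only [Ceval, star_one, hactone] at big
      rw [← big]
      -- right-hand side
      rw [map_sum1 (mulD (star c ⊗ₜ[ℂ] (1 : H)))]
      simp only [L1, star_one, hactone]

  -- involution (bullet 4)
  have hinv : ∀ x : B ⊗[ℂ] H, st (st x) = x := by
    intro x
    induction x using TensorProduct.induction_on with
    | zero => rw [hstzero, hstzero]
    | add x y hx hy => rw [hstadd, hstadd, hx, hy]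
    | tmul b h =>
      rw [st_list', hstsum]
      simp only [st_list]
      have starb : ∀ p : H × H, star (act p.1 (star b))
          = act (star (HopfAlgebra.antipode (R := ℂ) p.1)) b := by
        intro p; rw [huni, star_star]
      simp only [starb, comb]
      have Ceval : ∀ x y : H,
          ((TensorProduct.map (act.flip b) LinearMap.id).toAddMonoidHom.comp starTP)
            (x ⊗ₜ[ℂ] y) = act (star x) b ⊗ₜ[ℂ] star y := by
        intro x y; simp
      have big := map_sum2
        ((TensorProduct.map (act.flip b) LinearMap.id).toAddMonoidHom.comp starTP)
        (ρ (star h)) (fun p => ρ p.2)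
        (fun p r => (HopfAlgebra.antipode (R := ℂ) p.1 * r.1) ⊗ₜ[ℂ] r.2)
      rw [NL (star h)] at big
      simp only [Ceval] at big
      rw [← big]
      simp [hactone]
  -- antimultiplicativity (bullet 5)
  have hanti : ∀ x y, st (mulD x y) = mulD (st y) (st x) := by
    intro x y
    induction y using TensorProduct.induction_on with
    | zero => simp [hstzero]
    | add y1 y2 h1 h2 => simp [hstadd, h1, h2]
    | tmul c g =>
      have hy : (c ⊗ₜ[ℂ] g : B ⊗[ℂ] H) = mulD (c ⊗ₜ[ℂ] (1 : H)) ((1 : B) ⊗ₜ[ℂ] g) := by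
        rw [L1, mul_one]
      rw [hformula c g, hy, Aassoc c x ((1 : B) ⊗ₜ[ℂ] g), R1, R2,
        Aassoc (star c) ((1 : B) ⊗ₜ[ℂ] star g) (st x)]
  -- `B` is a *-subalgebra (bullet 6)
  have hB : ∀ b : B, st (b ⊗ₜ[ℂ] (1 : H)) = star b ⊗ₜ[ℂ] (1 : H) := by
    intro b
    rw [hsttmul, star_one]
    have hone : Coalgebra.comul (R := ℂ) (1 : H) = (1 : H) ⊗ₜ[ℂ] (1 : H) := by
      simpa [Algebra.TensorProduct.one_def] using Bialgebra.comul_one ℂ H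
    rw [hone]
    simp [hactone]
  -- `H` is a *-subalgebra (bullet 7)
  have hH : ∀ h : H, st ((1 : B) ⊗ₜ[ℂ] h) = (1 : B) ⊗ₜ[ℂ] star h := by
    intro h
    rw [hformula, star_one, etaL]
    have perp : ∀ p : H × H, act p.1 (1 : B) ⊗ₜ[ℂ] (p.2 * 1)
        = (1 : B) ⊗ₜ[ℂ] (Coalgebra.counit (R := ℂ) p.1 • p.2) := by
      intro p; rw [hmodone, mul_one, TensorProduct.smul_tmul]
    simp only [perp]
    rw [← tmul_list_sum, F1]
  exact ⟨st, hstadd, hstsmul, hformula, hinv, hanti, hB, hH⟩
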